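/- Let E be a Γ-semilattice with action τ, let e ∈ E×, let {e_j}_{j∈J} be a finite subset of E× with e_j ⪇ e for all j ∈ J, and let g ∈ Γ. If τ_g(e − ⋁_{j∈J} e_j) = e − ⋁_{j∈J} e_j in ℤ[E×], then τ_g(e) = e. -/

import Mathlib

set_option linter.unusedSectionVars false

/-- A *semilattice with zero*: a commutative idempotent semigroup with an
absorbing element `0`. -/
class SemilatticeWithZero (E : Type) extends CommSemigroup E, Zero E where
  mul_idem : ∀ e : E, e * e = e
  zero_mul : ∀ e : E, 0 * e = 0

namespace IndRes

variable {E : Type} [SemilatticeWithZero E]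

/-- `single e c`, viewed in the semigroup algebra `ℤ[E]`. -/
noncomputable def sgl (e : E) (c : ℤ) : MonoidAlgebra ℤ E := MonoidAlgebra.single e c

/-- Truncation map deleting the coefficient at `0`. -/
noncomputable def T (x : MonoidAlgebra ℤ E) : MonoidAlgebra ℤ E := x - sgl 0 (x.coeff 0)

lemma sgl_apply_self (e : E) (c : ℤ) : (sgl e c).coeff e = c := Finsupp.single_eq_same

lemma sgl_apply_ne (e d : E) (c : ℤ) (h : e ≠ d) : (sgl e c).coeff d = 0 := Finsupp.single_eq_of_ne h.symm

lemma sgl_add (e : E) (c d : ℤ) : sgl e (c + d) = sgl e c + sgl e d := MonoidAlgebra.single_add e c d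

lemma sgl_sub (e : E) (c d : ℤ) : sgl e (c - d) = sgl e c - sgl e d := MonoidAlgebra.single_sub e c d

lemma T_apply_zero (x : MonoidAlgebra ℤ E) : (T x).coeff 0 = 0 := by
  show ((x - sgl 0 (x.coeff 0) : MonoidAlgebra ℤ E)).coeff 0 = 0
  rw [MonoidAlgebra.coeff_sub, Finsupp.sub_apply, sgl_apply_self, sub_self]

/-- `ℤ[E^×]`, realized as the additive subgroup of the semigroup algebra
`ℤ[E]` consisting of the elements whose coefficient at `0` vanishes; it is the free
`ℤ`-module with basis `E^× = E \ {0}`. -/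
noncomputable def ZS (E : Type) [SemilatticeWithZero E] : AddSubgroup (MonoidAlgebra ℤ E) where
  carrier := {x | x.coeff 0 = 0}
  zero_mem' := rfl
  add_mem' := by
    intro a b ha hb
    simp only [Set.mem_setOf_eq] at *
    rw [MonoidAlgebra.coeff_add, Finsupp.add_apply, ha, hb, add_zero]
  neg_mem' := by
    intro a ha
    simp only [Set.mem_setOf_eq] at *
    rw [MonoidAlgebra.coeff_neg, Finsupp.neg_apply, ha, neg_zero]

/-- The integral semigroup ring `ℤ[E^×]`. -/
abbrev ZE (E : Type) [SemilatticeWithZero E] : Type := ↥(ZS E)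

lemma mem_ZS {x : MonoidAlgebra ℤ E} : x ∈ ZS E ↔ x.coeff 0 = 0 := Iff.rfl

lemma T_eq_self {x : MonoidAlgebra ℤ E} (h : x.coeff 0 = 0) : T x = x := by
  simp [T, h, sgl]

lemma T_add (a b : MonoidAlgebra ℤ E) : T (a + b) = T a + T b := by
  unfold T
  rw [show ((a + b).coeff 0) = a.coeff 0 + b.coeff 0 from Finsupp.add_apply a.coeff b.coeff 0, sgl_add]
  abel

lemma T_sub_sgl (x : MonoidAlgebra ℤ E) (m : ℤ) : T (x - sgl 0 m) = T x := by
  unfold T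
  have h : ((x - sgl 0 m : MonoidAlgebra ℤ E)).coeff 0 = x.coeff 0 - m := by
    rw [MonoidAlgebra.coeff_sub, Finsupp.sub_apply, sgl_apply_self]
  rw [h, sgl_sub]
  abel

lemma single_zero_mul (c : ℤ) (b : MonoidAlgebra ℤ E) :
    (sgl 0 c) * b = sgl 0 (((sgl 0 c * b : MonoidAlgebra ℤ E)).coeff 0) := by
  classical
  ext d
  by_cases hd : d = 0
  · subst hd; rw [sgl_apply_self]
  · rw [sgl_apply_ne 0 d _ (Ne.symm hd)]
    by_contra h
    have hmem : d ∈ ((sgl (0:E) c) * b).coeff.support := Finsupp.mem_support_iff.mpr h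
    have h2 := MonoidAlgebra.support_coeff_mul_subset (sgl (0:E) c) b hmem
    rw [Finset.mem_mul] at h2
    obtain ⟨a, ha, b', _, hab⟩ := h2
    have ha' : a = 0 := by
      have := Finsupp.support_single_subset (ha : a ∈ (Finsupp.single (0:E) c).support)
      simpa using this
    exact hd (by rw [← hab, ha', SemilatticeWithZero.zero_mul])

lemma T_mul_left (a b : MonoidAlgebra ℤ E) : T (T a * b) = T (a * b) := by
  have h1 : T a * b = a * b - (sgl 0 (a.coeff 0)) * b := by rw [T, sub_mul]
  rw [h1, single_zero_mul, T_sub_sgl]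

lemma T_mul_right (a b : MonoidAlgebra ℤ E) : T (a * T b) = T (a * b) := by
  rw [mul_comm a (T b), T_mul_left, mul_comm]

noncomputable instance : Mul (ZE E) :=
  ⟨fun x y => ⟨T (x.1 * y.1), T_apply_zero _⟩⟩

lemma ZE.val_mul (x y : ZE E) : (x * y).1 = T (x.1 * y.1) := rfl

noncomputable instance : NonUnitalCommRing (ZE E) :=
  { (inferInstance : AddCommGroup (ZE E)) with
    mul := (· * ·)
    left_distrib := by
      intro x y z
      apply Subtype.ext
      show T (x.1 * (y.1 + z.1)) = T (x.1 * y.1) + T (x.1 * z.1)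
      rw [mul_add, T_add]
    right_distrib := by
      intro x y z
      apply Subtype.ext
      show T ((x.1 + y.1) * z.1) = T (x.1 * z.1) + T (y.1 * z.1)
      rw [add_mul, T_add]
    zero_mul := by
      intro x
      apply Subtype.ext
      show T ((0 : MonoidAlgebra ℤ E) * x.1) = 0
      rw [zero_mul]
      simp [T, sgl]
    mul_zero := by
      intro x
      apply Subtype.ext
      show T (x.1 * (0 : MonoidAlgebra ℤ E)) = 0
      rw [mul_zero]
      simp [T, sgl]
    mul_assoc := by
      intro x y z
      apply Subtype.ext
      show T (T (x.1 * y.1) * z.1) = T (x.1 * T (y.1 * z.1))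
      rw [T_mul_left, T_mul_right, mul_assoc]
    mul_comm := by
      intro x y
      apply Subtype.ext
      show T (x.1 * y.1) = T (y.1 * x.1)
      rw [mul_comm] }

/-- The canonical image of `e ∈ E` in `ℤ[E^×]`: the basis element `e` if `e ≠ 0`,
and `0` if `e = 0`. -/
noncomputable def elt (e : E) : ZE E := ⟨T (sgl e 1), T_apply_zero _⟩

/-- Product of a (nonempty) finite family in a commutative non-unital ring, computed inside
the unitization.  For a nonempty index set this is the iterated product. -/
noncomputable def nprod {ι A : Type} [NonUnitalCommRing A] (s : Finset ι) (f : ι → A) : A :=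
  (∏ j ∈ s, (Unitization.inr (f j) : Unitization ℤ A)).snd

/-- The join `⋁_{j ∈ J} x_j = ∑_{∅ ≠ J' ⊆ J} (-1)^{|J'|+1} ∏_{j ∈ J'} x_j`
of a finite family of idempotents of a commutative non-unital ring. -/
noncomputable def rjoin {ι A : Type} [NonUnitalCommRing A] (s : Finset ι) (f : ι → A) : A :=
  ∑ t ∈ s.powerset.filter (fun t => t.Nonempty), ((-1 : ℤ) ^ (t.card + 1)) • nprod t f

/-- The join `⋁_{j ∈ J} e_j ∈ ℤ[E^×]` of a finite family of elements of `E`: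
`∑_{∅ ≠ J' ⊆ J} (-1)^{|J'|+1} ∏_{j ∈ J'} e_j`, where a product whose value in `E`
is `0` contributes `0`. -/
noncomputable def join {ι : Type} (s : Finset ι) (e : ι → E) : ZE E :=
  rjoin s (fun j => elt (e j))

/-- Iterated product of a nonempty list in a semigroup with zero (the value on the
empty list is the junk value `0`). -/
def listProd : List E → E
  | [] => 0
  | [a] => a
  | a :: b :: l => a * listProd (b :: l)

/-- The product `∏_{j ∈ s} f j ∈ E` of a (nonempty) finite family. -/
noncomputable def eprod {ι : Type} (s : Finset ι) (f : ι → E) : E :=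
  listProd (s.toList.map f)

/-- The support `E(x)` of `x ∈ ℤ[E^×]`: the finite set of elements of `E^×` appearing
with a nonzero coefficient in the reduced form of `x`. -/
noncomputable def supp (x : ZE E) : Finset E := x.1.coeff.support

section Action

variable {Γ : Type} [Group Γ] [MulAction Γ E]

/-- The induced action of `g ∈ Γ` on `ℤ[E^×]`: the `ℤ`-linear map sending a basis
element `e ∈ E^×` to `g • e`.  (When the action fixes `0` — which is the case for an
action by semigroup automorphisms fixing `0` — the truncation `T` is a no-op, and this
is the automorphism of `ℤ[E^×]` induced by `τ_g`.) -/
noncomputable def act (g : Γ) (x : ZE E) : ZE E :=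
  ⟨T (MonoidAlgebra.ofCoeff (Finsupp.mapDomain (fun e : E => g • e) x.1.coeff)), T_apply_zero _⟩

end Action



attribute [local instance] Classical.propDecidable

variable {E : Type} [SemilatticeWithZero E]

/-- A Γ-semilattice structure: the group acts by semigroup automorphisms fixing `0`. -/
def IsGammaSL (Γ E : Type) [Group Γ] [SemilatticeWithZero E] [MulAction Γ E] : Prop :=
  (∀ (g : Γ) (x y : E), g • (x * y) = (g • x) * (g • y)) ∧ (∀ g : Γ, g • (0 : E) = 0)

/-- The set `E_φ`. -/
def Ephi {D : Type} [NonUnitalCommRing D] (φ : ZE E →ₙ+* D) : Set (ZE E) :=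
  { x | ∃ (e : E) (J : Finset E), e ≠ 0 ∧ (∀ f ∈ J, f ≠ 0 ∧ f * e = f ∧ f ≠ e) ∧
      x = elt e - join J (fun f => f) ∧
      φ (elt e) = rjoin J (fun f => φ (elt f)) }

/-- `R` is a finite cover for `e ∈ E^×`. -/
def IsCover (e : E) (R : Finset E) : Prop :=
  (∀ f ∈ R, f ≠ 0 ∧ f * e = f) ∧
  ∀ f' : E, f' ≠ 0 → f' * e = f' → ∃ f ∈ R, f' * f ≠ 0

/-- `ℛ` is a collection of finite covers for `E`. -/
def CovSystem (ℛ : E → Set (Finset E)) : Prop :=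
  ∀ e : E, e ≠ 0 → ∀ R ∈ ℛ e, IsCover e R

/-- Condition (i). -/
def CondI (ℛ : E → Set (Finset E)) : Prop :=
  ∀ d e : E, d ≠ 0 → e ≠ 0 → d * e ≠ 0 → ∀ R ∈ ℛ e,
    d * e ∈ (R.image (fun f => d * f)).erase 0 ∨ (R.image (fun f => d * f)).erase 0 ∈ ℛ (d * e)

/-- Condition (ii). -/
def CondII (ℛ : E → Set (Finset E)) : Prop :=
  ∀ e : E, e ≠ 0 → ∀ r : ℕ, 0 < r → ∀ Rs : Fin r → Finset E,
    Function.Injective Rs → (∀ i, Rs i ∈ ℛ e) → ∀ ε : Fin r → E,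
    (∀ i, ε i ∈ supp (join (Rs i) (fun f => f))) → ∀ j : Fin r,
      (if r = 1 then e else eprod (Finset.univ.erase j) ε) ≠ 0 →
      eprod Finset.univ ε * (if r = 1 then e else eprod (Finset.univ.erase j) ε)
          = eprod Finset.univ ε ∧
      eprod Finset.univ ε ≠ (if r = 1 then e else eprod (Finset.univ.erase j) ε)

/-- Condition (iii). -/
def CondIII (Γ : Type) [Group Γ] [MulAction Γ E] (ℛ : E → Set (Finset E)) : Prop :=
  ∀ (g : Γ) (e : E), e ≠ 0 →
    (fun R : Finset E => R.image (fun f => g • f)) '' (ℛ e) = ℛ (g • e)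

/-- `e(𝒮) = ∏_{R ∈ 𝒮} (e - ⋁R) ∈ ℤ[E^×]`. -/
noncomputable def eS (e : E) (S : Finset (Finset E)) : ZE E :=
  nprod S (fun R => elt e - join R (fun f => f))

/-- `E(E,ℛ) = {e(𝒮) : e ∈ E^×, 𝒮 ⊆ ℛ(e) nonempty finite} ∪ {0} ⊆ ℤ[E^×]`. -/
def EER (ℛ : E → Set (Finset E)) : Set (ZE E) :=
  {x | ∃ (e : E) (S : Finset (Finset E)), e ≠ 0 ∧ S.Nonempty ∧ ↑S ⊆ ℛ e ∧ x = eS e S} ∪ {0}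

/-- `R(𝒮,R̃) = {e(𝒮 ∪ {R̃})} ∪ {f ⬝ e(𝒮) : f ∈ R̃, f ⬝ e(𝒮) ≠ 0}`. -/
noncomputable def RSR (e : E) (S : Finset (Finset E)) (Rt : Finset E) : Finset (ZE E) :=
  insert (eS e (insert Rt S)) ((Rt.image (fun f => elt f * eS e S)).erase 0)

/-- The collection of finite covers `ℛ(E,ℛ)` on `E(E,ℛ)`, assigning to an element
`x = e(𝒮)` of `E(E,ℛ)^×` the covers `R(𝒮,R̃)`, `R̃ ∈ ℛ(e) ∖ 𝒮` (over all ways of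
presenting `x` in the form `e(𝒮)`). -/
def RER (ℛ : E → Set (Finset E)) (x : ZE E) : Set (Finset (ZE E)) :=
  {C | ∃ (e : E) (S : Finset (Finset E)) (Rt : Finset E),
        e ≠ 0 ∧ S.Nonempty ∧ ↑S ⊆ ℛ e ∧ Rt ∈ ℛ e ∧ Rt ∉ S ∧ x = eS e S ∧ C = RSR e S Rt}

/-- The `ℤ`-linear map `ℤ[E₁^×] → ℤ[E₂^×]` induced by a map `θ` from `E₁` to `ℤ[E₂^×]`,
sending a basis element `e' ∈ E₁^×` to `θ e'`. -/
noncomputable def indMap {E₁ E₂ : Type} [SemilatticeWithZero E₁] [SemilatticeWithZero E₂]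
    (θ : E₁ → ZE E₂) : ZE E₁ →ₗ[ℤ] ZE E₂ :=
  (Finsupp.linearCombination ℤ θ).comp ((MonoidAlgebra.coeffAddEquiv.toAddMonoidHom.comp (ZS E₁).subtype).toIntLinearMap)

/-- `(E₁, ℛ₁, θ)` is a realization of the construction `(E(E,ℛ), ℛ(E,ℛ))`:
`θ` identifies the abstract Γ-semilattice `E₁` with `E(E,ℛ) ⊆ ℤ[E^×]` (equivariantly,
multiplicatively and preserving `0`), and `ℛ₁` corresponds to `ℛ(E,ℛ)` under this
identification. -/
def Realizes {Γ E E₁ : Type} [Group Γ] [SemilatticeWithZero E] [MulAction Γ E]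
    [SemilatticeWithZero E₁] [MulAction Γ E₁]
    (ℛ : E → Set (Finset E)) (ℛ₁ : E₁ → Set (Finset E₁)) (θ : E₁ → ZE E) : Prop :=
  Function.Injective θ ∧ Set.range θ = EER ℛ ∧ θ 0 = 0 ∧
  (∀ x y : E₁, θ (x * y) = θ x * θ y) ∧
  (∀ (g : Γ) (x : E₁), θ (g • x) = act g (θ x)) ∧
  (∀ e' : E₁, e' ≠ 0 → ∀ C : Finset E₁, C ∈ ℛ₁ e' ↔ C.image θ ∈ RER ℛ (θ e'))

end IndRes

open IndRes

section Aux5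

variable {E : Type} [SemilatticeWithZero E]

lemma aux_elt_val {e : E} (he : e ≠ 0) : (elt e).1.coeff = Finsupp.single e 1 := by
  simp [elt, T, sgl, MonoidAlgebra.coeff_sub, MonoidAlgebra.coeff_single, Finsupp.single_apply, he]

lemma aux_support_T (x : MonoidAlgebra ℤ E) : (T x).coeff.support ⊆ x.coeff.support := by
  intro d hd
  rw [Finsupp.mem_support_iff] at hd ⊢
  intro h
  apply hd
  by_cases hd0 : d = 0
  · subst hd0; exact T_apply_zero x
  · show (x - sgl 0 (x.coeff 0) : MonoidAlgebra ℤ E).coeff d = 0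
    rw [MonoidAlgebra.coeff_sub, Finsupp.sub_apply, h, sgl_apply_ne 0 d _ (Ne.symm hd0), sub_zero]

lemma aux_support_mul {S : Set E} (hS : ∀ a ∈ S, ∀ b ∈ S, a * b ∈ S)
    (x y : ZE E) (hx : ↑x.1.coeff.support ⊆ S) (hy : ↑y.1.coeff.support ⊆ S) :
    ↑(x * y).1.coeff.support ⊆ S := by
  classical
  intro d hd
  have hd' : d ∈ (x.1 * y.1).coeff.support := aux_support_T _ hd
  have h2 := MonoidAlgebra.support_coeff_mul_subset x.1 y.1 hd'
  rw [Finset.mem_mul] at h2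
  obtain ⟨a, ha, b, hb, hab⟩ := h2
  rw [← hab]
  exact hS a (hx ha) b (hy hb)

lemma aux_support_nprod {S : Set E} (hS : ∀ a ∈ S, ∀ b ∈ S, a * b ∈ S)
    {ι : Type} (t : Finset ι) (f : ι → ZE E) (hf : ∀ j ∈ t, ↑(f j).1.coeff.support ⊆ S) :
    ↑(nprod t f).1.coeff.support ⊆ S := by
  classical
  unfold nprod
  induction t using Finset.induction_on with
  | empty => simp
  | @insert a t ha ih =>
    rw [Finset.prod_insert ha]
    rw [Unitization.snd_mul]
    have hfa : ↑(f a).1.coeff.support ⊆ S := hf a (Finset.mem_insert_self a t)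
    have iht : ↑((∏ j ∈ t, (Unitization.inr (f j) : Unitization ℤ (ZE E))).snd).1.coeff.support ⊆ S :=
      ih (fun j hj => hf j (Finset.mem_insert_of_mem hj))
    intro d hd
    have hval : (((Unitization.inr (f a) : Unitization ℤ (ZE E)).fst) •
        (∏ j ∈ t, (Unitization.inr (f j) : Unitization ℤ (ZE E))).snd
      + (∏ j ∈ t, (Unitization.inr (f j) : Unitization ℤ (ZE E))).fst •
        ((Unitization.inr (f a) : Unitization ℤ (ZE E)).snd)
      + ((Unitization.inr (f a) : Unitization ℤ (ZE E)).snd) *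
        (∏ j ∈ t, (Unitization.inr (f j) : Unitization ℤ (ZE E))).snd).1.coeff d ≠ 0 :=
      Finsupp.mem_support_iff.mp hd
    rw [Unitization.fst_inr, Unitization.snd_inr, zero_smul, zero_add] at hval
    set P := (∏ j ∈ t, (Unitization.inr (f j) : Unitization ℤ (ZE E)))
    have : (P.fst • f a).1.coeff d ≠ 0 ∨ (f a * P.snd).1.coeff d ≠ 0 := by
      by_contra h
      push_neg at h
      apply hval
      show ((P.fst • f a + f a * P.snd : ZE E)).1.coeff d = 0
      have : ((P.fst • f a + f a * P.snd : ZE E)).1 = (P.fst • f a).1 + (f a * P.snd).1 := rfl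
      rw [this, MonoidAlgebra.coeff_add, Finsupp.add_apply, h.1, h.2, add_zero]
    rcases this with h | h
    · have : (P.fst • f a).1 = P.fst • (f a).1 := rfl
      rw [this, MonoidAlgebra.coeff_smul, Finsupp.smul_apply] at h
      have : (f a).1.coeff d ≠ 0 := fun h0 => h (by rw [h0, smul_zero])
      exact hfa (Finsupp.mem_support_iff.mpr this)
    · exact aux_support_mul hS (f a) P.snd hfa iht (Finsupp.mem_support_iff.mpr h)

lemma aux_support_rjoin {S : Set E} (hS : ∀ a ∈ S, ∀ b ∈ S, a * b ∈ S)
    {ι : Type} (s : Finset ι) (f : ι → ZE E) (hf : ∀ j ∈ s, ↑(f j).1.coeff.support ⊆ S) :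
    ↑(rjoin s f).1.coeff.support ⊆ S := by
  classical
  unfold rjoin
  intro d hd
  have hval : ((∑ t ∈ s.powerset.filter (fun t => t.Nonempty),
      ((-1 : ℤ) ^ (t.card + 1)) • nprod t f : ZE E)).1.coeff d ≠ 0 := Finsupp.mem_support_iff.mp hd
  have hco : ((∑ t ∈ s.powerset.filter (fun t => t.Nonempty),
      ((-1 : ℤ) ^ (t.card + 1)) • nprod t f : ZE E)).1.coeff
      = ∑ t ∈ s.powerset.filter (fun t => t.Nonempty),
        ((-1 : ℤ) ^ (t.card + 1)) • (nprod t f).1.coeff := by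
    rw [AddSubgroup.val_finset_sum, MonoidAlgebra.coeff_sum]
    rfl
  rw [hco, Finsupp.finset_sum_apply] at hval
  obtain ⟨t, ht, hne⟩ := Finset.exists_ne_zero_of_sum_ne_zero hval
  rw [Finsupp.smul_apply] at hne
  have : (nprod t f).1.coeff d ≠ 0 := fun h0 => hne (by rw [h0, smul_zero])
  have hts : t ⊆ s := Finset.mem_powerset.mp (Finset.mem_filter.mp ht).1
  exact aux_support_nprod hS t f (fun j hj => hf j (hts hj)) (Finsupp.mem_support_iff.mpr this)

end Aux5


theorem statement_5 {E Γ : Type} [SemilatticeWithZero E] [Group Γ] [MulAction Γ E]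
    (hact : IsGammaSL Γ E)
    (e : E) (he : e ≠ 0) (J : Finset E)
    (hJ : ∀ f ∈ J, f ≠ 0 ∧ f * e = f ∧ f ≠ e)
    (g : Γ)
    (hfix : act g (elt e - join J (fun f => f)) = elt e - join J (fun f => f)) :
    g • e = e := by
    classical
  -- The set S of elements strictly below e
  set S : Set E := {f | f * e = f ∧ f ≠ e} with hSdef
  have hSmul : ∀ a ∈ S, ∀ b ∈ S, a * b ∈ S := by
    rintro a ⟨hae, hane⟩ b ⟨hbe, hbne⟩
    constructor
    · rw [mul_assoc, hbe]
    · intro hab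
      apply hane
      calc a = a * e := hae.symm
        _ = a * (a * b) := by rw [hab]
        _ = (a * a) * b := (mul_assoc a a b).symm
        _ = a * b := by rw [SemilatticeWithZero.mul_idem]
        _ = e := hab
  -- the join has support in S
  have hjoinS : ↑((join J (fun f => f)).1.coeff.support : Finset E) ⊆ S := by
    apply aux_support_rjoin hSmul
    intro j hj
    obtain ⟨hj0, hje, hjne⟩ := hJ j hj
    rw [aux_elt_val hj0]
    intro d hd
    have : d = j := by
      have := Finsupp.support_single_subset (hd : d ∈ (Finsupp.single j (1:ℤ)).support)
      simpa using this
    rw [this]; exact ⟨hje, hjne⟩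
  set x : ZE E := elt e - join J (fun f => f) with hxdef
  have hxval : x.1 = (elt e).1 - (join J (fun f => f)).1 := rfl
  have hjoin_e : (join J (fun f => f)).1.coeff e = 0 := by
    by_contra h
    have : e ∈ S := hjoinS (Finsupp.mem_support_iff.mpr h)
    exact this.2 rfl
  have hxe : x.1.coeff e = 1 := by
    rw [hxval, MonoidAlgebra.coeff_sub, Finsupp.sub_apply, aux_elt_val he, Finsupp.single_eq_same, hjoin_e, sub_zero]
  have hxmul : ∀ d : E, x.1.coeff d ≠ 0 → d * e = d := by
    intro d hd
    by_cases hde : d = e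
    · rw [hde]; exact SemilatticeWithZero.mul_idem e
    · have : (join J (fun f => f)).1.coeff d ≠ 0 := by
        intro h0
        apply hd
        rw [hxval, MonoidAlgebra.coeff_sub, Finsupp.sub_apply, aux_elt_val he, Finsupp.single_eq_of_ne hde, h0,
          sub_zero]
      exact (hjoinS (Finsupp.mem_support_iff.mpr this)).1
  -- use the fixed-point hypothesis
  have hinj : Function.Injective (fun d : E => g • d) := MulAction.injective g
  have hmap0 : Finsupp.mapDomain (fun d : E => g • d) x.1.coeff 0 = 0 := by
    have h0 : (0 : E) = (fun d : E => g • d) 0 := (hact.2 g).symm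
    rw [h0, Finsupp.mapDomain_apply hinj, mem_ZS.mp x.2]
  have hmd : Finsupp.mapDomain (fun d : E => g • d) x.1.coeff = x.1.coeff := by
    have h1 : (act g x).1 = x.1 := congrArg Subtype.val hfix
    rw [show (act g x).1 = T (MonoidAlgebra.ofCoeff (Finsupp.mapDomain (fun d : E => g • d) x.1.coeff)) from rfl,
      T_eq_self (x := MonoidAlgebra.ofCoeff (Finsupp.mapDomain (fun d : E => g • d) x.1.coeff)) hmap0] at h1
    exact congrArg MonoidAlgebra.coeff h1
  have heq : ∀ d : E, x.1.coeff (g • d) = x.1.coeff d := by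
    intro d
    have h := Finsupp.mapDomain_apply hinj x.1.coeff d
    rw [hmd] at h
    exact h
  -- g•e and g⁻¹•e are in the support of x
  have h1 : (g • e) * e = g • e := by
    apply hxmul
    rw [heq e, hxe]; exact one_ne_zero
  have h2 : (g⁻¹ • e) * e = g⁻¹ • e := by
    apply hxmul
    have := heq (g⁻¹ • e)
    rw [smul_inv_smul] at this
    rw [← this, hxe]; exact one_ne_zero
  have h3 : e * (g • e) = e := by
    have := congrArg (fun d => g • d) h2
    rw [hact.1 g, smul_inv_smul] at this
    exact this
  rw [← h1, mul_comm, h3]
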